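/- Let X be a smooth normed space with its unique compatible semi-inner product [·,·]. Then for x ≠ 0, x is Birkhoff–James orthogonal to y if and only if [y, x] = 0. -/

import Mathlib

open RCLike

/-- A support functional at `x`: a norm-one continuous linear functional with `φ x = ‖x‖`. -/
def SuppFunc (𝕜 : Type*) [RCLike 𝕜] {X : Type*} [NormedAddCommGroup X] [NormedSpace 𝕜 X]
    (x : X) (φ : X →L[𝕜] 𝕜) : Prop :=
  ‖φ‖ = 1 ∧ φ x = (‖x‖ : 𝕜)

/-- `X` is smooth at `x` if there is a unique support functional at `x`. -/
def NormSmoothAt (𝕜 : Type*) [RCLike 𝕜] {X : Type*} [NormedAddCommGroup X] [NormedSpace 𝕜 X]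
    (x : X) : Prop := ∃! φ : X →L[𝕜] 𝕜, SuppFunc 𝕜 x φ

/-- `X` is smooth if it is smooth at every nonzero point. -/
def NormSmooth (𝕜 : Type*) (X : Type*) [RCLike 𝕜] [NormedAddCommGroup X] [NormedSpace 𝕜 X] :
    Prop := ∀ x : X, x ≠ 0 → NormSmoothAt 𝕜 x

/-- `sip` is the canonical semi-inner product `[u,v] = ‖v‖ * φ_v u` built from support
functionals (on a smooth space this pins `sip` down uniquely). -/
def IsCompatSIP (𝕜 : Type*) {X : Type*} [RCLike 𝕜] [NormedAddCommGroup X] [NormedSpace 𝕜 X]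
    (sip : X → X → 𝕜) : Prop :=
  (∀ u : X, sip u 0 = 0) ∧
  ∀ (u v : X) (φ : X →L[𝕜] 𝕜), SuppFunc 𝕜 v φ → sip u v = (‖v‖ : 𝕜) * φ u

/-- Birkhoff–James orthogonality: `x ⊥ y` iff `‖x + a • y‖ ≥ ‖x‖` for all scalars. -/
def BJOrth (𝕜 : Type*) {X : Type*} [RCLike 𝕜] [NormedAddCommGroup X] [NormedSpace 𝕜 X]
    (x y : X) : Prop := ∀ a : 𝕜, ‖x‖ ≤ ‖x + a • y‖

/-- A semi-inner product compatible with the norm: additive and homogeneous in the first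
variable, conjugate-homogeneous in the second, positive definite, Cauchy–Schwarz, and
`[x,x] = ‖x‖²`. -/
def IsSIP (𝕜 : Type*) {X : Type*} [RCLike 𝕜] [NormedAddCommGroup X] [NormedSpace 𝕜 X]
    (sip : X → X → 𝕜) : Prop :=
  (∀ x y z : X, sip (x + y) z = sip x z + sip y z) ∧
  (∀ (a : 𝕜) (x y : X), sip (a • x) y = a * sip x y) ∧
  (∀ (a : 𝕜) (x y : X), sip x (a • y) = (starRingEnd 𝕜) a * sip x y) ∧
  (∀ x : X, x ≠ 0 → 0 < re (sip x x) ∧ im (sip x x) = 0) ∧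
  (∀ x y : X, ‖sip x y‖ ≤ Real.sqrt (re (sip x x)) * Real.sqrt (re (sip y y))) ∧
  (∀ x : X, sip x x = (‖x‖ : 𝕜) ^ 2)

set_option maxHeartbeats 1000000 in
theorem stmt4 {𝕜 : Type*} [RCLike 𝕜] {X : Type*} [NormedAddCommGroup X] [NormedSpace 𝕜 X]
    (hsm : NormSmooth 𝕜 X) (sip : X → X → 𝕜) (hsip : IsCompatSIP 𝕜 sip)
    (x y : X) (hx : x ≠ 0) :
    BJOrth 𝕜 x y ↔ sip y x = 0 := by
  obtain ⟨h0, hcompat⟩ := hsip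
  obtain ⟨φ, hφ, huniq⟩ := hsm x hx
  have hxn : (0:ℝ) < ‖x‖ := norm_pos_iff.mpr hx
  constructor
  · intro hbj
    have key : ∀ s t : 𝕜, ‖s‖ * ‖x‖ ≤ ‖s • x + t • y‖ := by
      intro s t
      rcases eq_or_ne s 0 with rfl | hs
      · simp [norm_nonneg]
      · have h1 : s • x + t • y = s • (x + (t/s) • y) := by
          rw [smul_add, smul_smul, mul_div_cancel₀ _ hs]
        rw [h1, norm_smul]
        exact mul_le_mul_of_nonneg_left (hbj (t/s)) (norm_nonneg s)
    rcases eq_or_ne y 0 with rfl | hy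
    · rw [hcompat 0 x φ hφ, map_zero, mul_zero]
    · have hli : LinearIndependent 𝕜 ![x, y] := by
        rw [LinearIndependent.pair_iff]
        intro s t hst
        have h1 : ‖s‖ * ‖x‖ ≤ 0 := by simpa [hst] using key s t
        have hs : s = 0 := by
          by_contra h
          have := mul_pos (norm_pos_iff.mpr h) hxn
          linarith
        subst hs
        rw [zero_smul, zero_add] at hst
        rcases smul_eq_zero.mp hst with h | h
        · exact ⟨rfl, h⟩
        · exact absurd h hy
      set p : Submodule 𝕜 X := Submodule.span 𝕜 (Set.range ![x, y]) with hp
      haveI : FiniteDimensional 𝕜 p := FiniteDimensional.span_of_finite 𝕜 (Set.finite_range _)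
      set b : Module.Basis (Fin 2) 𝕜 p := Module.Basis.span hli with hb
      set f₀ : p →ₗ[𝕜] 𝕜 := b.constr 𝕜 ![(‖x‖ : 𝕜), 0] with hf₀
      have hb0 : (b 0 : X) = x := congrArg Subtype.val (Module.Basis.span_apply hli 0)
      have hb1 : (b 1 : X) = y := congrArg Subtype.val (Module.Basis.span_apply hli 1)
      have hf0b : f₀ (b 0) = (‖x‖ : 𝕜) := by rw [hf₀, Module.Basis.constr_basis]; rfl
      have hf1b : f₀ (b 1) = 0 := by rw [hf₀, Module.Basis.constr_basis]; rfl
      have hbound : ∀ z : p, ‖f₀ z‖ ≤ ‖(z : X)‖ := by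
        intro z
        have hz := b.sum_repr z
        rw [Fin.sum_univ_two] at hz
        set a0 := b.repr z 0 with ha0
        set a1 := b.repr z 1 with ha1
        have hzv : (z : X) = a0 • x + a1 • y := by
          rw [← hz]; push_cast; rw [hb0, hb1]
        have hfz : f₀ z = a0 * (‖x‖ : 𝕜) := by
          rw [← hz, map_add, map_smul, map_smul, hf0b, hf1b, smul_eq_mul, smul_eq_mul,
            mul_zero, add_zero]
        rw [hfz, hzv, norm_mul, RCLike.norm_ofReal, abs_of_nonneg (norm_nonneg x)]
        exact key _ _
      set f : p →L[𝕜] 𝕜 := f₀.toContinuousLinearMap with hf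
      have hxp : x ∈ p := Submodule.subset_span ⟨0, rfl⟩
      have hyp : y ∈ p := Submodule.subset_span ⟨1, rfl⟩
      have hfx : f ⟨x, hxp⟩ = (‖x‖ : 𝕜) := by
        have : (⟨x, hxp⟩ : p) = b 0 := Subtype.ext hb0.symm
        rw [this]; exact hf0b
      have hfy : f ⟨y, hyp⟩ = 0 := by
        have : (⟨y, hyp⟩ : p) = b 1 := Subtype.ext hb1.symm
        rw [this]; exact hf1b
      have hfnorm : ‖f‖ = 1 := by
        apply le_antisymm
        · exact f.opNorm_le_bound zero_le_one (fun z => by rw [one_mul]; exact hbound z)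
        · have h1 : ‖x‖ = ‖f ⟨x, hxp⟩‖ := by
            rw [hfx, RCLike.norm_ofReal, abs_of_nonneg (norm_nonneg x)]
          have h2 := f.le_opNorm ⟨x, hxp⟩
          rw [← h1] at h2
          have h3 : ‖(⟨x, hxp⟩ : p)‖ = ‖x‖ := rfl
          rw [h3] at h2
          nlinarith
      obtain ⟨g, hg, hgnorm⟩ := exists_extension_norm_eq p f
      have hgs : SuppFunc 𝕜 x g := ⟨by rw [hgnorm, hfnorm], by rw [hg ⟨x, hxp⟩, hfx]⟩
      rw [hcompat y x g hgs, hg ⟨y, hyp⟩, hfy, mul_zero]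
  · intro hs a
    have hφy : φ y = 0 := by
      have h1 := hcompat y x φ hφ
      rw [hs] at h1
      rcases mul_eq_zero.mp h1.symm with h | h
      · exact absurd h (by simpa using hxn.ne')
      · exact h
    have h1 : (‖x‖:ℝ) = re (φ (x + a • y)) := by
      rw [map_add, map_smul, hφy, smul_zero, add_zero, hφ.2, ofReal_re]
    calc ‖x‖ = re (φ (x + a • y)) := h1
      _ ≤ ‖φ (x + a • y)‖ := re_le_norm _
      _ ≤ ‖φ‖ * ‖x + a • y‖ := φ.le_opNorm _
      _ = ‖x + a • y‖ := by rw [hφ.1, one_mul]
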